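/- In a finite-horizon Dynkin game on a finite probability space with payoff H(σ,τ) = X_σ·1_{σ<τ} + Y_τ·1_{τ≤σ}, where (X_k) and (Y_k) are adapted processes with Y_k ≤ X_k for all k ≤ N, the game has a value: inf_σ sup_τ E[H(σ,τ)] = sup_τ inf_σ E[H(σ,τ)], with σ, τ ranging over stopping times with values in {0,...,N}. -/

import Mathlib

open MeasureTheory

namespace Dynkin19

variable {Ω : Type*} [Fintype Ω] {m0 : MeasurableSpace Ω}

lemma integrable_fin (μ : Measure Ω) [IsFiniteMeasure μ] {f : Ω → ℝ}
    (hf : AEStronglyMeasurable f μ) : Integrable f μ :=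
  ⟨hf, HasFiniteIntegral.of_bounded (C := ∑ x : Ω, ‖f x‖)
    (ae_of_all _ fun ω => Finset.single_le_sum (f := fun x => ‖f x‖)
      (fun i _ => norm_nonneg _) (Finset.mem_univ ω))⟩

noncomputable def U (μ : Measure Ω) (𝒢 : Filtration ℕ m0) (X Y : ℕ → Ω → ℝ) (N : ℕ) :
    ℕ → Ω → ℝ
  | 0 => Y N
  | (j+1) => fun ω => min (X (N - (j+1)) ω)
      (max (Y (N - (j+1)) ω) ((μ[U μ 𝒢 X Y N j | 𝒢 (N - (j+1))]) ω))

noncomputable def V (μ : Measure Ω) (𝒢 : Filtration ℕ m0) (X Y : ℕ → Ω → ℝ) (N k : ℕ) :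
    Ω → ℝ := U μ 𝒢 X Y N (N - k)

variable {μ : Measure Ω} [IsProbabilityMeasure μ] {𝒢 : Filtration ℕ m0}
  {X Y : ℕ → Ω → ℝ} {N : ℕ}

lemma V_N : V μ 𝒢 X Y N N = Y N := by
  rw [V, Nat.sub_self, U]

lemma V_rec {k : ℕ} (hk : k < N) : V μ 𝒢 X Y N k =
    fun ω => min (X k ω) (max (Y k ω) ((μ[V μ 𝒢 X Y N (k+1) | 𝒢 k]) ω)) := by
  have h1 : N - k = (N - (k+1)) + 1 := by omega
  have h2 : N - (N - (k+1) + 1) = k := by omega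
  rw [V, h1, U, h2]
  rfl

lemma sm_U (hX : Adapted 𝒢 X) (hY : Adapted 𝒢 Y) (j : ℕ) :
    StronglyMeasurable[𝒢 (N - j)] (U μ 𝒢 X Y N j) := by
  cases j with
  | zero => rw [U]; simpa using (hY N).stronglyMeasurable
  | succ j =>
      rw [U]
      exact ((hX _).min
        ((hY _).max stronglyMeasurable_condExp.measurable)).stronglyMeasurable

lemma sm_V (hX : Adapted 𝒢 X) (hY : Adapted 𝒢 Y) (k : ℕ) :
    StronglyMeasurable[𝒢 k] (V μ 𝒢 X Y N k) := by
  by_cases hk : k ≤ N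
  · have := sm_U (μ := μ) (N := N) hX hY (N - k)
    rwa [Nat.sub_sub_self hk] at this
  · push_neg at hk
    have h0 : N - k = 0 := by omega
    rw [V, h0]
    exact (hY N).stronglyMeasurable.mono (𝒢.mono hk.le)

lemma adapted_V (hX : Adapted 𝒢 X) (hY : Adapted 𝒢 Y) : Adapted 𝒢 (V μ 𝒢 X Y N) :=
  fun k => (sm_V hX hY k).measurable

lemma coe_min_nat (a b : ℕ) : WithTop.some (min a b) = min (WithTop.some a) (WithTop.some b) := by
  rcases le_total a b with h | h
  · rw [min_eq_left h, min_eq_left (WithTop.coe_le_coe.mpr h)]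
  · rw [min_eq_right h, min_eq_right (WithTop.coe_le_coe.mpr h)]

lemma sp_apply (u : ℕ → Ω → ℝ) (σ : Ω → ℕ) (i : ℕ) (ω : Ω) :
    stoppedProcess u (fun ω => (σ ω : WithTop ℕ)) i ω = u (min i (σ ω)) ω := by
  simp only [stoppedProcess, Nat.cast_withTop]; rw [← coe_min_nat]; rfl

lemma integrable_V (hX : Adapted 𝒢 X) (hY : Adapted 𝒢 Y) (k : ℕ) :
    Integrable (V μ 𝒢 X Y N k) μ :=
  integrable_fin μ ((sm_V hX hY k).mono (𝒢.le k)).aestronglyMeasurable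


lemma Y_le_V (hYX : ∀ k ≤ N, ∀ ω, Y k ω ≤ X k ω) {k : ℕ} (hk : k ≤ N) (ω : Ω) :
    Y k ω ≤ V μ 𝒢 X Y N k ω := by
  rcases eq_or_lt_of_le hk with h | h
  · subst h; rw [V_N]
  · rw [V_rec h]
    exact le_min (hYX k hk ω) (le_max_left _ _)

lemma V_le_X (hYX : ∀ k ≤ N, ∀ ω, Y k ω ≤ X k ω) {k : ℕ} (hk : k ≤ N) (ω : Ω) :
    V μ 𝒢 X Y N k ω ≤ X k ω := by
  rcases eq_or_lt_of_le hk with h | h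
  · subst h; rw [V_N]; exact hYX _ le_rfl ω
  · rw [V_rec h]; exact min_le_left _ _

lemma condexp_le_V {k : ℕ} (hk : k < N) (ω : Ω)
    (hne : V μ 𝒢 X Y N k ω ≠ X k ω) :
    (μ[V μ 𝒢 X Y N (k+1) | 𝒢 k]) ω ≤ V μ 𝒢 X Y N k ω := by
  have hVk : V μ 𝒢 X Y N k ω
      = min (X k ω) (max (Y k ω) ((μ[V μ 𝒢 X Y N (k+1) | 𝒢 k]) ω)) := by
    rw [V_rec hk]
  rw [hVk] at hne ⊢
  rcases min_choice (X k ω) (max (Y k ω) ((μ[V μ 𝒢 X Y N (k+1) | 𝒢 k]) ω)) with h | h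
  · exact absurd h hne
  · rw [h]; exact le_max_right _ _

lemma V_le_condexp (hYX : ∀ k ≤ N, ∀ ω, Y k ω ≤ X k ω) {k : ℕ} (hk : k < N) (ω : Ω)
    (hne : V μ 𝒢 X Y N k ω ≠ Y k ω) :
    V μ 𝒢 X Y N k ω ≤ (μ[V μ 𝒢 X Y N (k+1) | 𝒢 k]) ω := by
  have hgt : Y k ω < V μ 𝒢 X Y N k ω :=
    lt_of_le_of_ne (Y_le_V hYX hk.le ω) (Ne.symm hne)
  have h1 : V μ 𝒢 X Y N k ω ≤ max (Y k ω) ((μ[V μ 𝒢 X Y N (k+1) | 𝒢 k]) ω) := by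
    conv_lhs => rw [V_rec hk]
    exact min_le_right _ _
  rcases le_max_iff.mp h1 with h | h
  · exact absurd h (not_le.mpr hgt)
  · exact h


noncomputable def sigmaStar (μ : Measure Ω) (𝒢 : Filtration ℕ m0) (X Y : ℕ → Ω → ℝ)
    (N : ℕ) : Ω → ℕ :=
  hittingBtwn (fun k ω => V μ 𝒢 X Y N k ω - X k ω) {(0:ℝ)} 0 N

noncomputable def tauStar (μ : Measure Ω) (𝒢 : Filtration ℕ m0) (X Y : ℕ → Ω → ℝ)
    (N : ℕ) : Ω → ℕ :=
  hittingBtwn (fun k ω => V μ 𝒢 X Y N k ω - Y k ω) {(0:ℝ)} 0 N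

lemma sigmaStar_isStoppingTime (hX : Adapted 𝒢 X) (hY : Adapted 𝒢 Y) :
    IsStoppingTime 𝒢 (fun ω => (sigmaStar μ 𝒢 X Y N ω : WithTop ℕ)) :=
  Adapted.isStoppingTime_hittingBtwn (fun k => (sm_V hX hY k).measurable.sub (hX k))
    (measurableSet_singleton 0)

lemma tauStar_isStoppingTime (hX : Adapted 𝒢 X) (hY : Adapted 𝒢 Y) :
    IsStoppingTime 𝒢 (fun ω => (tauStar μ 𝒢 X Y N ω : WithTop ℕ)) :=
  Adapted.isStoppingTime_hittingBtwn (fun k => (sm_V hX hY k).measurable.sub (hY k))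
    (measurableSet_singleton 0)

lemma sigmaStar_le (ω : Ω) : sigmaStar μ 𝒢 X Y N ω ≤ N := hittingBtwn_le ω

lemma tauStar_le (ω : Ω) : tauStar μ 𝒢 X Y N ω ≤ N := hittingBtwn_le ω

lemma V_eq_X_sigmaStar {ω : Ω} (hlt : sigmaStar μ 𝒢 X Y N ω < N) :
    V μ 𝒢 X Y N (sigmaStar μ 𝒢 X Y N ω) ω = X (sigmaStar μ 𝒢 X Y N ω) ω := by
  have h := hittingBtwn_mem_set_of_hittingBtwn_lt hlt
  simp only [Set.mem_singleton_iff, sub_eq_zero] at h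
  exact h

lemma V_ne_X_of_lt_sigmaStar {ω : Ω} {i : ℕ} (h : i < sigmaStar μ 𝒢 X Y N ω) (hiN : i < N) :
    V μ 𝒢 X Y N i ω ≠ X i ω := by
  intro heq
  have : sigmaStar μ 𝒢 X Y N ω ≤ i :=
    hittingBtwn_le_of_mem (Nat.zero_le i) hiN.le (by simp [heq])
  omega

lemma V_eq_Y_tauStar (ω : Ω) :
    V μ 𝒢 X Y N (tauStar μ 𝒢 X Y N ω) ω = Y (tauStar μ 𝒢 X Y N ω) ω := by
  have hex : ∃ j ∈ Set.Icc 0 N, (V μ 𝒢 X Y N j ω - Y j ω) ∈ ({(0:ℝ)} : Set ℝ) :=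
    ⟨N, ⟨Nat.zero_le N, le_rfl⟩, by simp [V_N]⟩
  have h := hittingBtwn_mem_set (u := fun k ω => V μ 𝒢 X Y N k ω - Y k ω)
    (s := {(0:ℝ)}) (n := 0) (m := N) hex
  simp only [Set.mem_singleton_iff, sub_eq_zero] at h
  exact h

lemma V_ne_Y_of_lt_tauStar {ω : Ω} {i : ℕ} (h : i < tauStar μ 𝒢 X Y N ω) (hiN : i < N) :
    V μ 𝒢 X Y N i ω ≠ Y i ω := by
  intro heq
  have : tauStar μ 𝒢 X Y N ω ≤ i :=
    hittingBtwn_le_of_mem (Nat.zero_le i) hiN.le (by simp [heq])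
  omega

lemma superm (hX : Adapted 𝒢 X) (hY : Adapted 𝒢 Y) :
    Supermartingale (stoppedProcess (V μ 𝒢 X Y N) (fun ω => (sigmaStar μ 𝒢 X Y N ω : WithTop ℕ))) 𝒢 μ := by
  have hσ : IsStoppingTime 𝒢 (fun ω => (sigmaStar μ 𝒢 X Y N ω : WithTop ℕ)) := sigmaStar_isStoppingTime hX hY
  set σ := sigmaStar μ 𝒢 X Y N with hσdef
  set W := stoppedProcess (V μ 𝒢 X Y N) (fun ω => (σ ω : WithTop ℕ)) with hWdef
  have hadW : StronglyAdapted 𝒢 W := (adapted_V hX hY).stronglyAdapted.stoppedProcess_of_discrete hσ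
  have hintW : ∀ i, Integrable (W i) μ := fun i =>
    integrable_fin μ ((hadW i).mono (𝒢.le i)).aestronglyMeasurable
  refine supermartingale_nat hadW hintW fun i => ?_
  rcases le_or_gt N i with hNi | hiN
  · have hWW : W (i+1) = W i := by
      funext ω
      have hb : σ ω ≤ N := hittingBtwn_le ω
      rw [hWdef, sp_apply, sp_apply]
      rw [min_eq_right (by omega), min_eq_right (by omega)]
    rw [hWW, condExp_of_stronglyMeasurable (𝒢.le i) (hadW i) (hintW i)]
  · set A : Set Ω := {ω | i < σ ω} with hAdef
    have hA : MeasurableSet[𝒢 i] A := by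
      have : A = {ω | σ ω ≤ i}ᶜ := by ext ω; simp [hAdef, not_le]
      rw [this]; exact (by simpa using hσ i : MeasurableSet[𝒢 i] {ω | σ ω ≤ i}).compl
    have hdec : W (i+1) = A.indicator (V μ 𝒢 X Y N (i+1)) + Aᶜ.indicator (W i) := by
      funext ω
      by_cases h : ω ∈ A
      · have h' : i < σ ω := h
        rw [Pi.add_apply, Set.indicator_of_mem h,
          Set.indicator_of_notMem (Set.notMem_compl_iff.mpr h), add_zero]
        rw [hWdef, sp_apply]
        rw [min_eq_left (by omega)]
      · have h' : σ ω ≤ i := not_lt.mp h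
        rw [Pi.add_apply, Set.indicator_of_notMem h,
          Set.indicator_of_mem (Set.mem_compl h), zero_add]
        rw [hWdef, sp_apply, sp_apply]
        rw [min_eq_right (by omega), min_eq_right h']
    have hint1 : Integrable (A.indicator (V μ 𝒢 X Y N (i+1))) μ :=
      (integrable_V hX hY (i+1)).indicator (𝒢.le i _ hA)
    have hint2 : Integrable (Aᶜ.indicator (W i)) μ :=
      (hintW i).indicator (𝒢.le i _ hA.compl)
    have e1 : μ[W (i+1)|𝒢 i]
        =ᵐ[μ] μ[A.indicator (V μ 𝒢 X Y N (i+1))|𝒢 i] + μ[Aᶜ.indicator (W i)|𝒢 i] := by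
      rw [hdec]; exact condExp_add hint1 hint2 _
    have e2 : μ[A.indicator (V μ 𝒢 X Y N (i+1))|𝒢 i]
        =ᵐ[μ] A.indicator (μ[V μ 𝒢 X Y N (i+1)|𝒢 i]) :=
      condExp_indicator (integrable_V hX hY (i+1)) hA
    have e3 : μ[Aᶜ.indicator (W i)|𝒢 i] = Aᶜ.indicator (W i) :=
      condExp_of_stronglyMeasurable (𝒢.le i) ((hadW i).indicator hA.compl) hint2
    filter_upwards [e1, e2] with ω h1 h2
    rw [h1, Pi.add_apply, h2, e3]
    by_cases h : ω ∈ A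
    · rw [Set.indicator_of_mem h, Set.indicator_of_notMem (Set.notMem_compl_iff.mpr h),
        add_zero]
      have h' : i < σ ω := h
      have hWi : W i ω = V μ 𝒢 X Y N i ω := by
        rw [hWdef, sp_apply]
        rw [min_eq_left h'.le]
      rw [hWi]
      exact condexp_le_V hiN ω (V_ne_X_of_lt_sigmaStar h' hiN)
    · rw [Set.indicator_of_notMem h, Set.indicator_of_mem (Set.mem_compl h), zero_add]

lemma subm (hYX : ∀ k ≤ N, ∀ ω, Y k ω ≤ X k ω) (hX : Adapted 𝒢 X) (hY : Adapted 𝒢 Y) :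
    Submartingale (stoppedProcess (V μ 𝒢 X Y N) (fun ω => (tauStar μ 𝒢 X Y N ω : WithTop ℕ))) 𝒢 μ := by
  have hτ : IsStoppingTime 𝒢 (fun ω => (tauStar μ 𝒢 X Y N ω : WithTop ℕ)) := tauStar_isStoppingTime hX hY
  set τ := tauStar μ 𝒢 X Y N with hτdef
  set W := stoppedProcess (V μ 𝒢 X Y N) (fun ω => (τ ω : WithTop ℕ)) with hWdef
  have hadW : StronglyAdapted 𝒢 W := (adapted_V hX hY).stronglyAdapted.stoppedProcess_of_discrete hτ
  have hintW : ∀ i, Integrable (W i) μ := fun i =>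
    integrable_fin μ ((hadW i).mono (𝒢.le i)).aestronglyMeasurable
  refine submartingale_nat hadW hintW fun i => ?_
  rcases le_or_gt N i with hNi | hiN
  · have hWW : W (i+1) = W i := by
      funext ω
      have hb : τ ω ≤ N := hittingBtwn_le ω
      rw [hWdef, sp_apply, sp_apply]
      rw [min_eq_right (by omega), min_eq_right (by omega)]
    rw [hWW, condExp_of_stronglyMeasurable (𝒢.le i) (hadW i) (hintW i)]
  · set A : Set Ω := {ω | i < τ ω} with hAdef
    have hA : MeasurableSet[𝒢 i] A := by
      have : A = {ω | τ ω ≤ i}ᶜ := by ext ω; simp [hAdef, not_le]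
      rw [this]; exact (by simpa using hτ i : MeasurableSet[𝒢 i] {ω | τ ω ≤ i}).compl
    have hdec : W (i+1) = A.indicator (V μ 𝒢 X Y N (i+1)) + Aᶜ.indicator (W i) := by
      funext ω
      by_cases h : ω ∈ A
      · have h' : i < τ ω := h
        rw [Pi.add_apply, Set.indicator_of_mem h,
          Set.indicator_of_notMem (Set.notMem_compl_iff.mpr h), add_zero]
        rw [hWdef, sp_apply]
        rw [min_eq_left (by omega)]
      · have h' : τ ω ≤ i := not_lt.mp h
        rw [Pi.add_apply, Set.indicator_of_notMem h,
          Set.indicator_of_mem (Set.mem_compl h), zero_add]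
        rw [hWdef, sp_apply, sp_apply]
        rw [min_eq_right (by omega), min_eq_right h']
    have hint1 : Integrable (A.indicator (V μ 𝒢 X Y N (i+1))) μ :=
      (integrable_V hX hY (i+1)).indicator (𝒢.le i _ hA)
    have hint2 : Integrable (Aᶜ.indicator (W i)) μ :=
      (hintW i).indicator (𝒢.le i _ hA.compl)
    have e1 : μ[W (i+1)|𝒢 i]
        =ᵐ[μ] μ[A.indicator (V μ 𝒢 X Y N (i+1))|𝒢 i] + μ[Aᶜ.indicator (W i)|𝒢 i] := by
      rw [hdec]; exact condExp_add hint1 hint2 _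
    have e2 : μ[A.indicator (V μ 𝒢 X Y N (i+1))|𝒢 i]
        =ᵐ[μ] A.indicator (μ[V μ 𝒢 X Y N (i+1)|𝒢 i]) :=
      condExp_indicator (integrable_V hX hY (i+1)) hA
    have e3 : μ[Aᶜ.indicator (W i)|𝒢 i] = Aᶜ.indicator (W i) :=
      condExp_of_stronglyMeasurable (𝒢.le i) ((hadW i).indicator hA.compl) hint2
    filter_upwards [e1, e2] with ω h1 h2
    rw [h1, Pi.add_apply, h2, e3]
    by_cases h : ω ∈ A
    · rw [Set.indicator_of_mem h, Set.indicator_of_notMem (Set.notMem_compl_iff.mpr h),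
        add_zero]
      have h' : i < τ ω := h
      have hWi : W i ω = V μ 𝒢 X Y N i ω := by
        rw [hWdef, sp_apply]
        rw [min_eq_left h'.le]
      rw [hWi]
      exact V_le_condexp hYX hiN ω (V_ne_Y_of_lt_tauStar h' hiN)
    · rw [Set.indicator_of_notMem h, Set.indicator_of_mem (Set.mem_compl h), zero_add]


lemma integral_V_min_le (hX : Adapted 𝒢 X) (hY : Adapted 𝒢 Y)
    {τ : Ω → ℕ} (hτ : IsStoppingTime 𝒢 (fun ω => (τ ω : WithTop ℕ))) (hτN : ∀ ω, τ ω ≤ N) :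
    ∫ ω, V μ 𝒢 X Y N (min (τ ω) (sigmaStar μ 𝒢 X Y N ω)) ω ∂μ
      ≤ ∫ ω, V μ 𝒢 X Y N 0 ω ∂μ := by
  have hsub := (superm (μ := μ) (N := N) hX hY).neg
  have h := hsub.expected_stoppedValue_mono (isStoppingTime_const 𝒢 0) hτ
    (fun ω => WithTop.coe_le_coe.mpr (Nat.zero_le _)) (N := N) (fun ω => WithTop.coe_le_coe.mpr (hτN ω))
  have e0 : stoppedValue (-(stoppedProcess (V μ 𝒢 X Y N) (fun ω => (sigmaStar μ 𝒢 X Y N ω : WithTop ℕ))))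
      (fun _ => WithTop.some (0:ℕ)) = fun ω => -(V μ 𝒢 X Y N 0 ω) := by
    funext ω
    show -(stoppedProcess (V μ 𝒢 X Y N) (fun ω => (sigmaStar μ 𝒢 X Y N ω : WithTop ℕ)) 0 ω) = _
    rw [sp_apply]
    rw [min_eq_left (Nat.zero_le _)]
  have e1 : stoppedValue (-(stoppedProcess (V μ 𝒢 X Y N) (fun ω => (sigmaStar μ 𝒢 X Y N ω : WithTop ℕ)))) (fun ω => (τ ω : WithTop ℕ))
      = fun ω => -(V μ 𝒢 X Y N (min (τ ω) (sigmaStar μ 𝒢 X Y N ω)) ω) := by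
    funext ω
    show -(stoppedProcess (V μ 𝒢 X Y N) (fun ω => (sigmaStar μ 𝒢 X Y N ω : WithTop ℕ)) (τ ω) ω) = _
    rw [sp_apply]
  simp only [e0, e1] at h; rw [integral_neg, integral_neg] at h
  exact neg_le_neg_iff.mp h

lemma le_integral_V_min (hYX : ∀ k ≤ N, ∀ ω, Y k ω ≤ X k ω)
    (hX : Adapted 𝒢 X) (hY : Adapted 𝒢 Y)
    {σ : Ω → ℕ} (hσ : IsStoppingTime 𝒢 (fun ω => (σ ω : WithTop ℕ))) (hσN : ∀ ω, σ ω ≤ N) :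
    ∫ ω, V μ 𝒢 X Y N 0 ω ∂μ
      ≤ ∫ ω, V μ 𝒢 X Y N (min (σ ω) (tauStar μ 𝒢 X Y N ω)) ω ∂μ := by
  have h := (subm (μ := μ) hYX hX hY).expected_stoppedValue_mono (isStoppingTime_const 𝒢 0) hσ
    (fun ω => WithTop.coe_le_coe.mpr (Nat.zero_le _)) (N := N) (fun ω => WithTop.coe_le_coe.mpr (hσN ω))
  have e0 : stoppedValue (stoppedProcess (V μ 𝒢 X Y N) (fun ω => (tauStar μ 𝒢 X Y N ω : WithTop ℕ)))
      (fun _ => WithTop.some (0:ℕ)) = fun ω => V μ 𝒢 X Y N 0 ω := by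
    funext ω
    show stoppedProcess (V μ 𝒢 X Y N) (fun ω => (tauStar μ 𝒢 X Y N ω : WithTop ℕ)) 0 ω = _
    rw [sp_apply]
    rw [min_eq_left (Nat.zero_le _)]
  have e1 : stoppedValue (stoppedProcess (V μ 𝒢 X Y N) (fun ω => (tauStar μ 𝒢 X Y N ω : WithTop ℕ))) (fun ω => (σ ω : WithTop ℕ))
      = fun ω => V μ 𝒢 X Y N (min (σ ω) (tauStar μ 𝒢 X Y N ω)) ω := by
    funext ω
    show stoppedProcess (V μ 𝒢 X Y N) (fun ω => (tauStar μ 𝒢 X Y N ω : WithTop ℕ)) (σ ω) ω = _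
    rw [sp_apply]
  simp only [e0, e1] at h; exact h


lemma measurable_H (hX : Adapted 𝒢 X) (hY : Adapted 𝒢 Y) {σ τ : Ω → ℕ}
    (hσ : IsStoppingTime 𝒢 (fun ω => (σ ω : WithTop ℕ)))
    (hτ : IsStoppingTime 𝒢 (fun ω => (τ ω : WithTop ℕ))) :
    Measurable (fun ω => if σ ω < τ ω then X (σ ω) ω else Y (τ ω) ω) := by
  have hmσ : Measurable σ := measurable_to_countable' fun x => 𝒢.le x _ (by
    have := hσ.measurableSet_eq_of_countable x
    convert this using 1; ext ω; simp)
  have hmτ : Measurable τ := measurable_to_countable' fun x => 𝒢.le x _ (by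
    have := hτ.measurableSet_eq_of_countable x
    convert this using 1; ext ω; simp)
  have hs : MeasurableSet {ω | σ ω < τ ω} := measurableSet_lt hmσ hmτ
  have h1 : Measurable (stoppedValue X (fun ω => (σ ω : WithTop ℕ))) :=
    (measurable_stoppedValue hX.stronglyAdapted.isStronglyProgressive_of_discrete hσ).mono hσ.measurableSpace_le le_rfl
  have h2 : Measurable (stoppedValue Y (fun ω => (τ ω : WithTop ℕ))) :=
    (measurable_stoppedValue hY.stronglyAdapted.isStronglyProgressive_of_discrete hτ).mono hτ.measurableSpace_le le_rfl
  exact Measurable.ite hs h1 h2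

lemma measurable_V_stopped (hX : Adapted 𝒢 X) (hY : Adapted 𝒢 Y) {ρ : Ω → ℕ}
    (hρ : IsStoppingTime 𝒢 (fun ω => (ρ ω : WithTop ℕ))) :
    Measurable (fun ω => V μ 𝒢 X Y N (ρ ω) ω) := by
  have := (measurable_stoppedValue (adapted_V (μ := μ) (N := N) hX hY).stronglyAdapted.isStronglyProgressive_of_discrete
    hρ).mono hρ.measurableSpace_le le_rfl
  exact this

end Dynkin19

open Dynkin19

/-- Existence of the value of a finite-horizon Dynkin game on a finite
probability space: with adapted payoffs Y ≤ X and
H(σ,τ) = X_σ·1_{σ<τ} + Y_τ·1_{τ≤σ}, one has inf_σ sup_τ E[H] = sup_τ inf_σ E[H]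
over stopping times with values in {0,...,N}. -/
theorem stmt_19 {Ω : Type*} [Fintype Ω] {m0 : MeasurableSpace Ω} (μ : Measure Ω)
    [IsProbabilityMeasure μ] (N : ℕ) (𝒢 : Filtration ℕ m0)
    (X Y : ℕ → Ω → ℝ) (hX : Adapted 𝒢 X) (hY : Adapted 𝒢 Y)
    (hYX : ∀ k ≤ N, ∀ ω, Y k ω ≤ X k ω) :
    (⨅ σ : {σ : Ω → ℕ // IsStoppingTime 𝒢 (fun ω => (σ ω : WithTop ℕ)) ∧ ∀ ω, σ ω ≤ N},
      ⨆ τ : {τ : Ω → ℕ // IsStoppingTime 𝒢 (fun ω => (τ ω : WithTop ℕ)) ∧ ∀ ω, τ ω ≤ N},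
        ∫ ω, (if σ.1 ω < τ.1 ω then X (σ.1 ω) ω else Y (τ.1 ω) ω) ∂μ) =
    (⨆ τ : {τ : Ω → ℕ // IsStoppingTime 𝒢 (fun ω => (τ ω : WithTop ℕ)) ∧ ∀ ω, τ ω ≤ N},
      ⨅ σ : {σ : Ω → ℕ // IsStoppingTime 𝒢 (fun ω => (σ ω : WithTop ℕ)) ∧ ∀ ω, σ ω ≤ N},
        ∫ ω, (if σ.1 ω < τ.1 ω then X (σ.1 ω) ω else Y (τ.1 ω) ω) ∂μ) := by
  classical
  set T := {σ : Ω → ℕ // IsStoppingTime 𝒢 (fun ω => (σ ω : WithTop ℕ)) ∧ ∀ ω, σ ω ≤ N} with hT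
  haveI : Nonempty T := ⟨⟨fun _ => 0, isStoppingTime_const 𝒢 0, fun _ => Nat.zero_le N⟩⟩
  set F : T → T → ℝ :=
    fun σ τ => ∫ ω, (if σ.1 ω < τ.1 ω then X (σ.1 ω) ω else Y (τ.1 ω) ω) ∂μ with hF
  -- global bound
  set B : ℝ := ∑ k ∈ Finset.range (N+1), ∑ x : Ω, (|X k x| + |Y k x|) with hB
  have htermnn : ∀ k ∈ Finset.range (N+1), (0:ℝ) ≤ ∑ x : Ω, (|X k x| + |Y k x|) :=
    fun k _ => Finset.sum_nonneg fun x _ => add_nonneg (abs_nonneg _) (abs_nonneg _)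
  have hbX : ∀ k ≤ N, ∀ ω, |X k ω| ≤ B := by
    intro k hk ω
    calc |X k ω| ≤ |X k ω| + |Y k ω| := le_add_of_nonneg_right (abs_nonneg _)
      _ ≤ ∑ x : Ω, (|X k x| + |Y k x|) :=
          Finset.single_le_sum (f := fun x => |X k x| + |Y k x|)
            (fun x _ => add_nonneg (abs_nonneg _) (abs_nonneg _)) (Finset.mem_univ ω)
      _ ≤ B := Finset.single_le_sum (f := fun k => ∑ x : Ω, (|X k x| + |Y k x|)) htermnn (Finset.mem_range.mpr (by omega))
  have hbY : ∀ k ≤ N, ∀ ω, |Y k ω| ≤ B := by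
    intro k hk ω
    calc |Y k ω| ≤ |X k ω| + |Y k ω| := le_add_of_nonneg_left (abs_nonneg _)
      _ ≤ ∑ x : Ω, (|X k x| + |Y k x|) :=
          Finset.single_le_sum (f := fun x => |X k x| + |Y k x|)
            (fun x _ => add_nonneg (abs_nonneg _) (abs_nonneg _)) (Finset.mem_univ ω)
      _ ≤ B := Finset.single_le_sum (f := fun k => ∑ x : Ω, (|X k x| + |Y k x|)) htermnn (Finset.mem_range.mpr (by omega))
  have hFbound : ∀ σ τ : T, |F σ τ| ≤ B := by
    intro σ τ
    rw [← Real.norm_eq_abs]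
    have h := norm_integral_le_of_norm_le_const (μ := μ)
      (f := fun ω => (if σ.1 ω < τ.1 ω then X (σ.1 ω) ω else Y (τ.1 ω) ω)) (C := B)
      (ae_of_all _ fun ω => by
        show ‖(if σ.1 ω < τ.1 ω then X (σ.1 ω) ω else Y (τ.1 ω) ω : ℝ)‖ ≤ B
        by_cases h : σ.1 ω < τ.1 ω
        · rw [if_pos h, Real.norm_eq_abs]; exact hbX _ (σ.2.2 ω) ω
        · rw [if_neg h, Real.norm_eq_abs]; exact hbY _ (τ.2.2 ω) ω)
    simpa [measure_univ] using h
  -- the candidate optimal strategies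
  have hσs : IsStoppingTime 𝒢 (fun ω => (sigmaStar μ 𝒢 X Y N ω : WithTop ℕ)) := sigmaStar_isStoppingTime hX hY
  have hτs : IsStoppingTime 𝒢 (fun ω => (tauStar μ 𝒢 X Y N ω : WithTop ℕ)) := tauStar_isStoppingTime hX hY
  set σT : T := ⟨sigmaStar μ 𝒢 X Y N, hσs, fun ω => sigmaStar_le ω⟩ with hσT
  set τT : T := ⟨tauStar μ 𝒢 X Y N, hτs, fun ω => tauStar_le ω⟩ with hτT
  set v : ℝ := ∫ ω, V μ 𝒢 X Y N 0 ω ∂μ with hv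
  -- integrability facts
  have hHint : ∀ σ τ : T, Integrable (fun ω =>
      (if σ.1 ω < τ.1 ω then X (σ.1 ω) ω else Y (τ.1 ω) ω)) μ :=
    fun σ τ => integrable_fin μ (measurable_H hX hY σ.2.1 τ.2.1).aestronglyMeasurable
  have hVint : ∀ (ρ : Ω → ℕ), IsStoppingTime 𝒢 (fun ω => (ρ ω : WithTop ℕ)) → Integrable (fun ω =>
      V μ 𝒢 X Y N (ρ ω) ω) μ :=
    fun ρ hρ => integrable_fin μ (measurable_V_stopped hX hY hρ).aestronglyMeasurable
  -- seller guarantee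
  have key1 : ∀ τ : T, F σT τ ≤ v := by
    intro τ
    have hmin : IsStoppingTime 𝒢 (fun ω => ((min (τ.1 ω) (sigmaStar μ 𝒢 X Y N ω) : ℕ) : WithTop ℕ)) := by
      simpa only [Nat.cast_withTop, coe_min_nat] using τ.2.1.min hσs
    have hle : F σT τ ≤ ∫ ω, V μ 𝒢 X Y N (min (τ.1 ω) (sigmaStar μ 𝒢 X Y N ω)) ω ∂μ := by
      refine integral_mono (hHint σT τ) (hVint _ hmin) fun ω => ?_
      by_cases h : sigmaStar μ 𝒢 X Y N ω < τ.1 ω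
      · have hlt : sigmaStar μ 𝒢 X Y N ω < N := lt_of_lt_of_le h (τ.2.2 ω)
        simp only [hσT]
        rw [if_pos h, min_eq_right h.le, V_eq_X_sigmaStar hlt]
      · simp only [hσT]
        rw [if_neg h, min_eq_left (not_lt.mp h)]
        exact Y_le_V hYX (τ.2.2 ω) ω
    exact hle.trans (integral_V_min_le hX hY τ.2.1 τ.2.2)
  -- buyer guarantee
  have key2 : ∀ σ : T, v ≤ F σ τT := by
    intro σ
    have hmin : IsStoppingTime 𝒢 (fun ω => ((min (σ.1 ω) (tauStar μ 𝒢 X Y N ω) : ℕ) : WithTop ℕ)) := by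
      simpa only [Nat.cast_withTop, coe_min_nat] using σ.2.1.min hτs
    have hle : (∫ ω, V μ 𝒢 X Y N (min (σ.1 ω) (tauStar μ 𝒢 X Y N ω)) ω ∂μ) ≤ F σ τT := by
      refine integral_mono (hVint _ hmin) (hHint σ τT) fun ω => ?_
      by_cases h : σ.1 ω < tauStar μ 𝒢 X Y N ω
      · simp only [hτT]
        rw [if_pos h, min_eq_left h.le]
        exact V_le_X hYX (σ.2.2 ω) ω
      · simp only [hτT]
        rw [if_neg h, min_eq_right (not_lt.mp h), V_eq_Y_tauStar]
    exact (le_integral_V_min hYX hX hY σ.2.1 σ.2.2).trans hle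
  -- boundedness of sups and infs
  have hbdd1 : ∀ σ : T, BddAbove (Set.range fun τ : T => F σ τ) := by
    intro σ
    exact ⟨B, by rintro x ⟨τ, rfl⟩; exact (abs_le.mp (hFbound σ τ)).2⟩
  have hbdd2 : ∀ τ : T, BddBelow (Set.range fun σ : T => F σ τ) := by
    intro τ
    exact ⟨-B, by rintro x ⟨σ, rfl⟩; exact (abs_le.mp (hFbound σ τ)).1⟩
  have hbddB : BddBelow (Set.range fun σ : T => ⨆ τ : T, F σ τ) := by
    refine ⟨-B, ?_⟩
    rintro x ⟨σ, rfl⟩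
    exact le_trans (abs_le.mp (hFbound σ (Classical.arbitrary T))).1
      (le_ciSup (hbdd1 σ) (Classical.arbitrary T))
  have hbddA : BddAbove (Set.range fun τ : T => ⨅ σ : T, F σ τ) := by
    refine ⟨B, ?_⟩
    rintro x ⟨τ, rfl⟩
    exact le_trans (ciInf_le (hbdd2 τ) (Classical.arbitrary T))
      (abs_le.mp (hFbound (Classical.arbitrary T) τ)).2
  have h1 : (⨅ σ : T, ⨆ τ : T, F σ τ) ≤ v :=
    le_trans (ciInf_le hbddB σT) (ciSup_le key1)
  have h2 : v ≤ (⨆ τ : T, ⨅ σ : T, F σ τ) :=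
    le_trans (le_ciInf key2) (le_ciSup hbddA τT)
  have h3 : (⨆ τ : T, ⨅ σ : T, F σ τ) ≤ (⨅ σ : T, ⨆ τ : T, F σ τ) :=
    le_ciInf fun σ => ciSup_le fun τ => le_trans (ciInf_le (hbdd2 τ) σ) (le_ciSup (hbdd1 σ) τ)
  have : (⨅ σ : T, ⨆ τ : T, F σ τ) = (⨆ τ : T, ⨅ σ : T, F σ τ) := le_antisymm (by linarith) h3
  exact this
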